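/- For a formal power series φ(x) = x + higher order terms in one variable over a field F of characteristic zero, the compositional inverse satisfies φ^{-1}(x) = x + Σ_{m=1}^∞ Σ_{k=0}^m (-1)^k C(m,k) φ^{∘k}(x), where φ^{∘k} denotes k-fold composition of φ with itself, φ^{∘0} = id, and the double sum converges in the formal power series topology (each coefficient is determined by finitely many terms). -/

import Mathlib

open PowerSeries

/-- Composition `f ∘ g` of formal power series in one variable (intended for `g` with zero
constant term): the coefficient of `X^d` only involves `(coeff k f)` for `k ≤ d`. -/
noncomputable def PowerSeries.compose {F : Type*} [CommRing F] (f g : PowerSeries F) :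
    PowerSeries F :=
  PowerSeries.mk fun d => ∑ k ∈ Finset.range (d + 1), coeff k f * coeff d (g ^ k)

/-- `k`-fold compositional iterate `φ^{∘k}`, with `φ^{∘0} = id = X`. -/
noncomputable def PowerSeries.iterComp {F : Type*} [CommRing F] (φ : PowerSeries F) :
    ℕ → PowerSeries F
  | 0 => PowerSeries.X
  | k + 1 => PowerSeries.compose (PowerSeries.iterComp φ k) φ

/-- `Φ_m = ∑_{k=0}^m (-1)^k C(m,k) φ^{∘k}`. -/
noncomputable def PowerSeries.Phi {F : Type*} [CommRing F] (φ : PowerSeries F) (m : ℕ) :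
    PowerSeries F :=
  ∑ k ∈ Finset.range (m + 1), ((-1 : F) ^ k * (m.choose k : F)) • PowerSeries.iterComp φ k

namespace InvAux

variable {F : Type*} [Field F]

/-- weighted alternating sum `∑_{k=0}^m (-1)^k C(m,k) a k`. -/
noncomputable def S (m : ℕ) (a : ℕ → F) : F :=
  ∑ k ∈ Finset.range (m + 1), ((-1 : F) ^ k * (m.choose k : F)) * a k

lemma S_zero (a : ℕ → F) : S 0 a = a 0 := by simp [S]

lemma S_succ (m : ℕ) (a : ℕ → F) : S (m + 1) a = S m a - S m (fun k => a (k + 1)) := by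
  have hLHS : S (m + 1) a =
      (∑ k ∈ Finset.range (m + 1),
        (-((((-1 : F) ^ k * (m.choose k : F))) * a (k + 1))
          + ((-1 : F) ^ (k + 1) * (m.choose (k + 1) : F)) * a (k + 1))) + a 0 := by
    rw [S, Finset.sum_range_succ']
    congr 1
    · refine Finset.sum_congr rfl fun k _ => ?_
      rw [Nat.choose_succ_succ]
      push_cast
      ring
    · simp
  have hRHS : S m a =
      (∑ k ∈ Finset.range (m + 1), ((-1 : F) ^ (k + 1) * (m.choose (k + 1) : F)) * a (k + 1))
        + a 0 := by
    rw [S, Finset.sum_range_succ']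
    congr 1
    · rw [Finset.sum_range_succ, Nat.choose_succ_self]
      simp
    · simp
  rw [hLHS, Finset.sum_add_distrib, hRHS, S]
  simp only [Finset.sum_neg_distrib]
  ring

lemma S_shift_eq (m d : ℕ) (a : ℕ → ℕ → F) (c : ℕ → F)
    (hrec : ∀ k, a d (k + 1) = a d k + ∑ j ∈ Finset.range d, c j * a j k) :
    S m (fun k => a d (k + 1)) = S m (a d) + ∑ j ∈ Finset.range d, c j * S m (a j) := by
  simp only [S, hrec, mul_add, Finset.mul_sum, Finset.sum_add_distrib]
  congr 1
  rw [Finset.sum_comm]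
  refine Finset.sum_congr rfl fun j _ => ?_
  refine Finset.sum_congr rfl fun k _ => ?_
  ring




lemma coeff_pow_self (φ : PowerSeries F) (h0 : constantCoeff φ = 0) (h1 : coeff 1 φ = 1)
    (d : ℕ) : coeff d (φ ^ d) = 1 := by
  obtain ⟨g, hg⟩ := X_dvd_iff.mpr h0
  have hgc : constantCoeff g = 1 := by
    have h := coeff_succ_X_mul 0 g
    rw [← hg] at h
    rw [← coeff_zero_eq_constantCoeff, ← h, h1]
  have key : coeff (0 + d) (X ^ d * g ^ d) = coeff 0 (g ^ d) := coeff_X_pow_mul _ d 0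
  rw [zero_add] at key
  rw [hg, mul_pow, key, coeff_zero_eq_constantCoeff, map_pow, hgc, one_pow]

lemma iter_rec (φ : PowerSeries F) (h0 : constantCoeff φ = 0) (h1 : coeff 1 φ = 1)
    (d k : ℕ) :
    coeff d (φ.iterComp (k + 1)) =
      coeff d (φ.iterComp k) +
        ∑ j ∈ Finset.range d, coeff d (φ ^ j) * coeff j (φ.iterComp k) := by
  show coeff d (PowerSeries.compose (φ.iterComp k) φ) = _
  rw [PowerSeries.compose, coeff_mk, Finset.sum_range_succ, coeff_pow_self φ h0 h1 d, mul_one,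
    add_comm]
  congr 1
  refine Finset.sum_congr rfl fun j _ => ?_
  ring

/-- the doubly-indexed coefficient array `a d k = coeff d (φ^{∘k})`. -/
noncomputable def A (φ : PowerSeries F) (d k : ℕ) : F := coeff d (φ.iterComp k)

lemma A_rec (φ : PowerSeries F) (h0 : constantCoeff φ = 0) (h1 : coeff 1 φ = 1)
    (d : ℕ) (k : ℕ) :
    A φ d (k + 1) = A φ d k + ∑ j ∈ Finset.range d, coeff d (φ ^ j) * A φ j k :=
  iter_rec φ h0 h1 d k

lemma coeff_Phi (φ : PowerSeries F) (d m : ℕ) :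
    coeff d (φ.Phi m) = S m (A φ d) := by
  rw [PowerSeries.Phi, map_sum, S]
  refine Finset.sum_congr rfl fun k _ => ?_
  rw [LinearMap.map_smul, smul_eq_mul]
  rfl

lemma S_vanish (φ : PowerSeries F) (h0 : constantCoeff φ = 0) (h1 : coeff 1 φ = 1) :
    ∀ d m : ℕ, d < m → S m (A φ d) = 0 := by
  intro d
  induction d using Nat.strong_induction_on with
  | _ d ih =>
    intro m hm
    obtain ⟨m', rfl⟩ : ∃ m', m = m' + 1 := ⟨m - 1, by omega⟩
    rw [S_succ, S_shift_eq m' d (A φ) (fun j => coeff d (φ ^ j)) (A_rec φ h0 h1 d)]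
    rw [Finset.sum_eq_zero fun j hj => by
      rw [ih j (Finset.mem_range.mp hj) m' (by have := Finset.mem_range.mp hj; omega), mul_zero]]
    ring

lemma psi_rec (φ : PowerSeries F) (h0 : constantCoeff φ = 0) (h1 : coeff 1 φ = 1)
    (ψ : PowerSeries F) (hψ : PowerSeries.compose ψ φ = PowerSeries.X) (d : ℕ) :
    coeff d ψ = coeff d (X : PowerSeries F)
      - ∑ j ∈ Finset.range d, coeff d (φ ^ j) * coeff j ψ := by
  have h := congrArg (coeff d) hψ
  rw [PowerSeries.compose, coeff_mk, Finset.sum_range_succ, coeff_pow_self φ h0 h1 d,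
    mul_one] at h
  have h2 : ∑ j ∈ Finset.range d, coeff j ψ * coeff d (φ ^ j)
      = ∑ j ∈ Finset.range d, coeff d (φ ^ j) * coeff j ψ :=
    Finset.sum_congr rfl fun j _ => mul_comm _ _
  rw [h2] at h
  linear_combination h

lemma S_total (φ : PowerSeries F) (h0 : constantCoeff φ = 0) (h1 : coeff 1 φ = 1)
    (ψ : PowerSeries F) (hψ : PowerSeries.compose ψ φ = PowerSeries.X) :
    ∀ d N : ℕ, d ≤ N → ∑ m ∈ Finset.range (N + 1), S m (A φ d) = coeff d ψ := by
  intro d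
  induction d using Nat.strong_induction_on with
  | _ d ih =>
    intro N hdN
    rcases Nat.eq_zero_or_pos N with rfl | hN
    · -- N = 0, hence d = 0
      obtain rfl : d = 0 := by omega
      rw [psi_rec φ h0 h1 ψ hψ 0]
      simp [S_zero, A, PowerSeries.iterComp]
    · obtain ⟨N', rfl⟩ : ∃ N', N = N' + 1 := ⟨N - 1, by omega⟩
      have step : ∀ m, S (m + 1) (A φ d)
          = ∑ j ∈ Finset.range d, -(coeff d (φ ^ j) * S m (A φ j)) := by
        intro m
        rw [S_succ, S_shift_eq m d (A φ) (fun j => coeff d (φ ^ j)) (A_rec φ h0 h1 d)]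
        rw [Finset.sum_neg_distrib]
        ring
      rw [Finset.sum_range_succ']
      simp only [step]
      rw [Finset.sum_comm, S_zero]
      have hj : ∀ j ∈ Finset.range d,
          ∑ m ∈ Finset.range (N' + 1), -(coeff d (φ ^ j) * S m (A φ j))
            = -(coeff d (φ ^ j) * coeff j ψ) := by
        intro j hjm
        have hjd := Finset.mem_range.mp hjm
        rw [Finset.sum_neg_distrib, ← Finset.mul_sum, ih j hjd N' (by omega)]
      rw [Finset.sum_congr rfl hj]
      have hA0 : A φ d 0 = coeff d (X : PowerSeries F) := rfl
      rw [hA0, psi_rec φ h0 h1 ψ hψ d, Finset.sum_neg_distrib]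
      ring

end InvAux


/-- for `φ(x) = x + higher order terms`, the compositional inverse `ψ`
(characterized by `ψ(φ(x)) = x`) is given by
`φ⁻¹(x) = x + ∑_{m≥1} ∑_{k=0}^m (-1)^k C(m,k) φ^{∘k}(x)`, the outer sum converging in the
formal power series topology: for each degree `d` the inner sums `Φ_m` have vanishing
`d`-th coefficient for all large `m`, and the `d`-th coefficient of `φ⁻¹` is the
(finite) sum of the `d`-th coefficients. -/
theorem inversion_formula {F : Type*} [Field F] [CharZero F] (φ : PowerSeries F)
    (h0 : constantCoeff φ = 0) (h1 : coeff 1 φ = 1)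
    (ψ : PowerSeries F) (hψ0 : constantCoeff ψ = 0)
    (hψ : PowerSeries.compose ψ φ = PowerSeries.X) :
    (∀ d : ℕ, ∃ M : ℕ, ∀ m ≥ M, coeff d (PowerSeries.Phi φ m) = 0) ∧
      (∀ d : ℕ, ∀ M : ℕ, (∀ m > M, coeff d (PowerSeries.Phi φ m) = 0) →
        coeff d ψ =
          coeff d (PowerSeries.X : PowerSeries F) +
            ∑ m ∈ Finset.Icc 1 M, coeff d (PowerSeries.Phi φ m)) := by
  constructor
  · intro d
    refine ⟨d + 1, fun m hm => ?_⟩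
    rw [InvAux.coeff_Phi]
    exact InvAux.S_vanish φ h0 h1 d m (by omega)
  · intro d M h
    have hdN : d ≤ max M d := le_max_right _ _
    have hMN : M + 1 ≤ max M d + 1 := by omega
    have htotal := InvAux.S_total φ h0 h1 ψ hψ d (max M d) hdN
    have hzero : ∑ m ∈ Finset.Ico (M + 1) (max M d + 1), InvAux.S m (InvAux.A φ d) = 0 := by
      refine Finset.sum_eq_zero fun m hm => ?_
      obtain ⟨hm1, _⟩ := Finset.mem_Ico.mp hm
      have hh := h m (by omega)
      rwa [InvAux.coeff_Phi] at hh
    have hsum : ∑ m ∈ Finset.range (M + 1), InvAux.S m (InvAux.A φ d) = coeff d ψ := by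
      rw [← htotal, Finset.range_eq_Ico, Finset.range_eq_Ico,
        ← Finset.sum_Ico_consecutive _ (Nat.zero_le (M + 1)) hMN, hzero, add_zero]
    have hIcc : ∑ m ∈ Finset.Icc 1 M, coeff d (PowerSeries.Phi φ m)
        = ∑ m ∈ Finset.range M, InvAux.S (m + 1) (InvAux.A φ d) := by
      rw [show Finset.Icc 1 M = Finset.Ico 1 (M + 1) by rw [Finset.Ico_add_one_right_eq_Icc],
        Finset.sum_Ico_eq_sum_range]
      simp only [InvAux.coeff_Phi]
      refine Finset.sum_congr (by congr 1) fun m _ => by rw [add_comm 1 m]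
    rw [← hsum, Finset.sum_range_succ', hIcc, InvAux.S_zero]
    have hA0 : InvAux.A φ d 0 = coeff d (PowerSeries.X : PowerSeries F) := rfl
    rw [hA0, add_comm]
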